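/- Let v be a valuation on a superring R. Then every v-convex ideal 𝔞 of A_v is ℤ₂-graded, i.e., 𝔞 = (𝔞 ∩ R₀) ⊕ (𝔞 ∩ R₁); moreover, the set of v-convex ideals of A_v is totally ordered by inclusion: for any two v-convex ideals 𝔞, 𝔟 of A_v, either 𝔞 ⊆ 𝔟 or 𝔟 ⊆ 𝔞. -/

import Mathlib

universe u

/-- A superring: a `ZMod 2`-graded ring `R = R₀ ⊕ R₁` which is supercommutative
(`R₀` is central and every odd element squares to zero). -/
structure IsSuperring {R : Type*} [Ring R] (𝒜 : ZMod 2 → AddSubgroup R) : Prop where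
  one_mem : (1 : R) ∈ 𝒜 0
  mul_mem : ∀ {i j : ZMod 2} {x y : R}, x ∈ 𝒜 i → y ∈ 𝒜 j → x * y ∈ 𝒜 (i + j)
  decompose : ∀ x : R, ∃ x0 ∈ 𝒜 0, ∃ x1 ∈ 𝒜 1, x = x0 + x1
  unique_decomp : ∀ x0 ∈ 𝒜 0, ∀ x1 ∈ 𝒜 1, x0 + x1 = 0 → x0 = 0 ∧ x1 = 0
  even_central : ∀ x ∈ 𝒜 0, ∀ y : R, x * y = y * x
  odd_sq : ∀ x ∈ 𝒜 1, x * x = 0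

/-- A set is `ℤ₂`-graded (a "superset"): every element decomposes into an even and
an odd homogeneous component, both belonging to the set. -/
def IsGradedSet {R : Type*} [Ring R] (𝒜 : ZMod 2 → AddSubgroup R) (I : Set R) : Prop :=
  ∀ x ∈ I, ∃ x0 ∈ 𝒜 0, ∃ x1 ∈ 𝒜 1, x0 ∈ I ∧ x1 ∈ I ∧ x = x0 + x1

/-- A (Manis) valuation on a ring `R`: a surjective map `v : R → Γ ∪ {∞}`
(`∞ = ⊤` is absorbing and greater than every element of the totally ordered
abelian group `Γ`) with `v 0 = ∞`, `v 1 = 0`, `v (x*y) = v x + v y` and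
`v (x+y) ≥ min (v x) (v y)`. -/
structure IsValuation {R : Type*} [Ring R] {Γ : Type*} [AddCommGroup Γ] [LinearOrder Γ] [IsOrderedAddMonoid Γ]
    (v : R → WithTop Γ) : Prop where
  surjective : Function.Surjective v
  map_zero : v 0 = ⊤
  map_one : v 1 = 0
  map_mul : ∀ x y : R, v (x * y) = v x + v y
  min_le_add : ∀ x y : R, min (v x) (v y) ≤ v (x + y)

/-- `A_v = {x : v x ≥ 0}`. -/
def valRing {R : Type*} [Ring R] {Γ : Type*} [AddCommGroup Γ] [LinearOrder Γ] [IsOrderedAddMonoid Γ]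
    (v : R → WithTop Γ) : Set R := {x : R | 0 ≤ v x}

/-- `𝔭_v = {x : v x > 0}`. -/
def valIdeal {R : Type*} [Ring R] {Γ : Type*} [AddCommGroup Γ] [LinearOrder Γ] [IsOrderedAddMonoid Γ]
    (v : R → WithTop Γ) : Set R := {x : R | 0 < v x}

/-- `supp v = v⁻¹(∞)`. -/
def valSupp {R : Type*} [Ring R] {Γ : Type*} [AddCommGroup Γ] [LinearOrder Γ] [IsOrderedAddMonoid Γ]
    (v : R → WithTop Γ) : Set R := {x : R | v x = ⊤}

/-- An ideal `I` of a subring `A` of `R`, as sets. -/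
structure IsIdealOf {R : Type*} [Ring R] (A I : Set R) : Prop where
  subset : I ⊆ A
  zero_mem : (0 : R) ∈ I
  add_mem : ∀ {x y : R}, x ∈ I → y ∈ I → x + y ∈ I
  neg_mem : ∀ {x : R}, x ∈ I → -x ∈ I
  mul_mem_left : ∀ {a x : R}, a ∈ A → x ∈ I → a * x ∈ I
  mul_mem_right : ∀ {x a : R}, x ∈ I → a ∈ A → x * a ∈ I

/-- A `v`-convex ideal: `x ∈ I` and `v y ≥ v x` imply `y ∈ I`. -/
def IsVConvex {R : Type*} [Ring R] {Γ : Type*} [AddCommGroup Γ] [LinearOrder Γ] [IsOrderedAddMonoid Γ]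
    (v : R → WithTop Γ) (I : Set R) : Prop :=
  ∀ x ∈ I, ∀ y : R, v x ≤ v y → y ∈ I

/-- Every `v`-convex ideal of `A_v` is `ℤ₂`-graded, and the `v`-convex ideals of
`A_v` are totally ordered by inclusion. -/
theorem vconvex_graded_and_totally_ordered {R : Type u} [Ring R] [Nontrivial R]
    (𝒜 : ZMod 2 → AddSubgroup R) (hR : IsSuperring 𝒜)
    {Γ : Type*} [AddCommGroup Γ] [LinearOrder Γ] [IsOrderedAddMonoid Γ]
    (v : R → WithTop Γ) (hv : IsValuation v) :
    (∀ a : Set R, IsIdealOf (valRing v) a → IsVConvex v a → IsGradedSet 𝒜 a) ∧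
      ∀ a b : Set R, IsIdealOf (valRing v) a → IsVConvex v a →
        IsIdealOf (valRing v) b → IsVConvex v b → a ⊆ b ∨ b ⊆ a := by
  have hodd : ∀ x ∈ 𝒜 1, v x = ⊤ := by
    intro x hx
    have h := hv.map_mul x x
    rw [hR.odd_sq x hx, hv.map_zero] at h
    cases hvx : v x with
    | top => rfl
    | coe g => rw [hvx] at h; exact absurd h.symm (by simp)
  constructor
  · intro a ha hconv x hx
    obtain ⟨x0, h0, x1, h1, hx01⟩ := hR.decompose x
    have hvx1 : v x1 = ⊤ := hodd x1 h1
    have hvneg : v (-x1) = ⊤ := hodd (-x1) (neg_mem h1)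
    have hvx0 : v x ≤ v x0 := by
      have hx0 : x0 = x + -x1 := by rw [hx01]; abel
      rw [hx0]
      have hm := hv.min_le_add x (-x1)
      rw [hvneg] at hm
      simpa using hm
    exact ⟨x0, h0, x1, h1, hconv x hx x0 hvx0,
      hconv x hx x1 (hvx1 ▸ le_top), hx01⟩
  · intro a b _ hca _ hcb
    by_cases h : a ⊆ b
    · exact Or.inl h
    · right
      obtain ⟨x, hxa, hxb⟩ := Set.not_subset.mp h
      intro y hy
      have hle : v x ≤ v y := by
        by_contra hle
        push_neg at hle
        exact hxb (hcb y hy x hle.le)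
      exact hca x hxa y hle
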